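/- Define g₁, g₂, g₃ : ℝ² → ℝ by g₁(x₁,x₂) := |x₂| − x₁, g₂(x₁,x₂) := 1 − x₁² − (x₂ − 1)², g₃(x₁,x₂) := 1 − x₁² − (x₂ + 1)². Let K := {(x₁,x₂) : g_j(x₁,x₂) ≤ 0, j = 1,2,3}, C := {(x₁,x₂) ∈ ℝ² : x₁ ≥ 0}, K̃ := C ∩ K, and x̄ := (0,0). Then: each g_j is tangentially convex at x̄ with g₁(x̄) = g₂(x̄) = g₃(x̄) = 0; ∂_T g₁(x̄) = co{(−1,−1),(−1,1)}, ∂_T g₂(x̄) = {(0,2)}, ∂_T g₃(x̄) = {(0,−2)}; T_{K̃}(x̄) = D(x̄) = {(t₁,0) : t₁ ≥ 0}, so the non-smooth Abadie constraint qualification holds at x̄; but there is no ν ≠ 0 in ℝ² with ⟨η, ν⟩ < 0 for all η ∈ ∂_T g_j(x̄) and all j ∈ {1,2,3}, i.e., the non-smooth Robinson constraint qualification fails at x̄. -/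

import Mathlib

open Filter Set Pointwise
open scoped Topology RealInnerProductSpace

noncomputable section

variable {E : Type*} [NormedAddCommGroup E] [InnerProductSpace ℝ E]

/-- Directional derivative of `f` at `x` in direction `v`, as the limit of difference
quotients as `α → 0⁺` (defined via `limUnder`; meaningful when the limit exists). -/
noncomputable def dirDeriv (f : E → ℝ) (x v : E) : ℝ :=
  limUnder (𝓝[>] (0:ℝ)) (fun α : ℝ => (f (x + α • v) - f x) / α)

/-- `f` is tangentially convex at `x`: the directional derivative exists (and is finite)
in every direction, and `v ↦ f'(x, v)` is convex. -/
def TangentiallyConvexAt (f : E → ℝ) (x : E) : Prop :=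
  (∀ v : E, Tendsto (fun α : ℝ => (f (x + α • v) - f x) / α) (𝓝[>] (0:ℝ))
      (𝓝 (dirDeriv f x v)))
  ∧ ConvexOn ℝ Set.univ (dirDeriv f x)

/-- The tangential subdifferential `∂_T f (x)`. -/
def tangSubdiff (f : E → ℝ) (x : E) : Set E :=
  {p : E | ∀ v : E, ⟪p, v⟫ ≤ dirDeriv f x v}

/-- The polar cone `(W - x)°`. -/
def polarOf (W : Set E) (x : E) : Set E :=
  {l : E | ∀ y ∈ W, ⟪l, y - x⟫ ≤ 0}

/-- The contingent (Bouligand tangent) cone of `U` at `x`. -/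
def contingentCone (U : Set E) (x : E) : Set E :=
  {v : E | ∃ (a : ℕ → ℝ) (w : ℕ → E), (∀ k, 0 < a k) ∧
    Tendsto a atTop (𝓝 0) ∧ Tendsto w atTop (𝓝 v) ∧ ∀ k, x + a k • w k ∈ U}

/-- `V` is nearly convex at `x ∈ V`. -/
def NearlyConvexAt (V : Set E) (x : E) : Prop :=
  ∀ y ∈ V, ∃ t : ℕ → ℝ, (∀ k, 0 < t k) ∧ Tendsto t atTop (𝓝 0) ∧
    ∀ᶠ k in atTop, x + t k • (y - x) ∈ V

/-- The non-smooth linearized tangential cone `D(x)`. -/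
def linTangCone {m : ℕ} (g : Fin m → E → ℝ) (x : E) : Set E :=
  {v : E | ∀ j : Fin m, g j x = 0 → ∀ η ∈ tangSubdiff (g j) x, ⟪v, η⟫ ≤ 0}

/-- The set `M(x)` of nonnegative combinations of tangential subgradients of active
constraints. -/
def Mset {m : ℕ} (g : Fin m → E → ℝ) (x : E) : Set E :=
  {u : E | ∃ (lam : Fin m → ℝ) (η : Fin m → E),
    (∀ j, 0 ≤ lam j) ∧ (∀ j, lam j * g j x = 0) ∧
    (∀ j, η j ∈ tangSubdiff (g j) x) ∧ u = ∑ j, lam j • η j}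

/-- `w = P_W(x)`: `w` is a best approximation of `x` from `W`. -/
def IsBestApprox (W : Set E) (x w : E) : Prop :=
  w ∈ W ∧ ∀ u ∈ W, ‖x - w‖ ≤ ‖x - u‖

/-- The convex subdifferential of `h` at `x₀`. -/
def convexSubdiff (h : E → ℝ) (x₀ : E) : Set E :=
  {p : E | ∀ y : E, ⟪p, y - x₀⟫ ≤ h y - h x₀}


/-- The three constraint functions of Example 2.1. -/
def exg14 : Fin 3 → EuclideanSpace ℝ (Fin 2) → ℝ :=
  ![fun x => |x 1| - x 0,
    fun x => 1 - (x 0) ^ 2 - (x 1 - 1) ^ 2,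
    fun x => 1 - (x 0) ^ 2 - (x 1 + 1) ^ 2]

/-- The constraint set of Example 2.1. -/
def exK14 : Set (EuclideanSpace ℝ (Fin 2)) := {x | ∀ j : Fin 3, exg14 j x ≤ 0}

/-- The set `C` of Example 2.1. -/
def exC14 : Set (EuclideanSpace ℝ (Fin 2)) := {x | 0 ≤ x 0}

/-- A point of `ℝ²` from its coordinates. -/
def vec2 (a b : ℝ) : EuclideanSpace ℝ (Fin 2) :=
  (WithLp.equiv 2 (Fin 2 → ℝ)).symm ![a, b]


namespace Example14Aux

lemma vec2_apply0 (a b : ℝ) : vec2 a b 0 = a := rfl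
lemma vec2_apply1 (a b : ℝ) : vec2 a b 1 = b := rfl

lemma inner2 (x y : EuclideanSpace ℝ (Fin 2)) : ⟪x, y⟫ = x 0 * y 0 + x 1 * y 1 := by
  simp [PiLp.inner_apply, Fin.sum_univ_two]; ring

lemma ext2 {x y : EuclideanSpace ℝ (Fin 2)} (h0 : x 0 = y 0) (h1 : x 1 = y 1) : x = y := by
  ext i; fin_cases i <;> assumption

lemma tendsto0 (v : EuclideanSpace ℝ (Fin 2)) :
    Tendsto (fun α : ℝ => (exg14 0 (0 + α • v) - exg14 0 0) / α) (𝓝[>] (0:ℝ))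
      (𝓝 (|v 1| - v 0)) := by
  have h : ∀ᶠ α in 𝓝[>] (0:ℝ),
      (exg14 0 (0 + α • v) - exg14 0 0) / α = |v 1| - v 0 := by
    filter_upwards [self_mem_nhdsWithin] with α (hα : (0:ℝ) < α)
    simp only [exg14, Matrix.cons_val_zero, PiLp.add_apply, PiLp.smul_apply,
      PiLp.zero_apply, smul_eq_mul, zero_add, mul_zero, abs_zero, sub_zero,
      abs_mul, abs_of_pos hα]
    field_simp
  rw [tendsto_congr' h]
  exact tendsto_const_nhds

lemma tendsto1 (v : EuclideanSpace ℝ (Fin 2)) :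
    Tendsto (fun α : ℝ => (exg14 1 (0 + α • v) - exg14 1 0) / α) (𝓝[>] (0:ℝ))
      (𝓝 (2 * v 1)) := by
  have h : ∀ᶠ α in 𝓝[>] (0:ℝ),
      (exg14 1 (0 + α • v) - exg14 1 0) / α = 2 * v 1 - α * ((v 0)^2 + (v 1)^2) := by
    filter_upwards [self_mem_nhdsWithin] with α (hα : (0:ℝ) < α)
    simp only [exg14, Matrix.cons_val_one, Matrix.head_cons, Matrix.cons_val_zero, PiLp.add_apply,
      PiLp.smul_apply, PiLp.zero_apply, smul_eq_mul, zero_add]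
    field_simp
    ring
  rw [tendsto_congr' h]
  have hc : Continuous (fun α : ℝ => 2 * v 1 - α * ((v 0)^2 + (v 1)^2)) := by fun_prop
  simpa using (hc.tendsto 0).mono_left nhdsWithin_le_nhds

lemma tendsto2 (v : EuclideanSpace ℝ (Fin 2)) :
    Tendsto (fun α : ℝ => (exg14 2 (0 + α • v) - exg14 2 0) / α) (𝓝[>] (0:ℝ))
      (𝓝 (-(2 * v 1))) := by
  have h : ∀ᶠ α in 𝓝[>] (0:ℝ),
      (exg14 2 (0 + α • v) - exg14 2 0) / α = -(2 * v 1) - α * ((v 0)^2 + (v 1)^2) := by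
    filter_upwards [self_mem_nhdsWithin] with α (hα : (0:ℝ) < α)
    simp only [exg14, Matrix.cons_val_two, Matrix.tail_cons, Matrix.head_cons,
      PiLp.add_apply, PiLp.smul_apply, PiLp.zero_apply, smul_eq_mul, zero_add]
    field_simp
    ring
  rw [tendsto_congr' h]
  have hc : Continuous (fun α : ℝ => -(2 * v 1) - α * ((v 0)^2 + (v 1)^2)) := by fun_prop
  simpa using (hc.tendsto 0).mono_left nhdsWithin_le_nhds

lemma dd0 (v : EuclideanSpace ℝ (Fin 2)) : dirDeriv (exg14 0) 0 v = |v 1| - v 0 :=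
  (tendsto0 v).limUnder_eq

lemma dd1 (v : EuclideanSpace ℝ (Fin 2)) : dirDeriv (exg14 1) 0 v = 2 * v 1 :=
  (tendsto1 v).limUnder_eq

lemma dd2 (v : EuclideanSpace ℝ (Fin 2)) : dirDeriv (exg14 2) 0 v = -(2 * v 1) :=
  (tendsto2 v).limUnder_eq

lemma sub0 : tangSubdiff (exg14 0) 0 = {p : EuclideanSpace ℝ (Fin 2) | p 0 = -1 ∧ |p 1| ≤ 1} := by
  ext p
  simp only [tangSubdiff, mem_setOf_eq]
  constructor
  · intro h
    have h1 := h (vec2 1 0)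
    have h2 := h (vec2 (-1) 0)
    have h3 := h (vec2 0 1)
    have h4 := h (vec2 0 (-1))
    rw [inner2, dd0] at h1 h2 h3 h4
    simp [vec2_apply0, vec2_apply1] at h1 h2 h3 h4
    constructor
    · linarith
    · rw [abs_le]; constructor <;> linarith
  · rintro ⟨h0, h1⟩ v
    rw [inner2, dd0, h0]
    rcases abs_le.1 h1 with ⟨ha, hb⟩
    rcases abs_cases (v 1) with ⟨he, _⟩ | ⟨he, _⟩ <;> nlinarith

lemma hull0 : convexHull ℝ {vec2 (-1) (-1), vec2 (-1) 1} =
    {p : EuclideanSpace ℝ (Fin 2) | p 0 = -1 ∧ |p 1| ≤ 1} := by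
  rw [convexHull_pair]
  ext p
  simp only [segment_eq_image, mem_image, mem_setOf_eq]
  constructor
  · rintro ⟨t, ⟨ht0, ht1⟩, rfl⟩
    have e0 : ((1 - t) • vec2 (-1) (-1) + t • vec2 (-1) 1) 0 = -1 := by
      simp [PiLp.add_apply, PiLp.smul_apply, vec2_apply0]; ring
    have e1 : ((1 - t) • vec2 (-1) (-1) + t • vec2 (-1) 1) 1 = 2 * t - 1 := by
      simp [PiLp.add_apply, PiLp.smul_apply, vec2_apply1]; ring
    refine ⟨e0, ?_⟩
    rw [e1, abs_le]
    constructor <;> linarith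
  · rintro ⟨h0, h1⟩
    rcases abs_le.1 h1 with ⟨ha, hb⟩
    refine ⟨(1 + p 1) / 2, ⟨by linarith, by linarith⟩, ?_⟩
    refine ext2 ?_ ?_
    · simp [PiLp.add_apply, PiLp.smul_apply, vec2_apply0, h0]; ring
    · simp [PiLp.add_apply, PiLp.smul_apply, vec2_apply1]; ring

lemma sub1 : tangSubdiff (exg14 1) 0 = {vec2 0 2} := by
  ext p
  simp only [tangSubdiff, mem_setOf_eq, mem_singleton_iff]
  constructor
  · intro h
    have h1 := h (vec2 1 0)
    have h2 := h (vec2 (-1) 0)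
    have h3 := h (vec2 0 1)
    have h4 := h (vec2 0 (-1))
    rw [inner2, dd1] at h1 h2 h3 h4
    simp [vec2_apply0, vec2_apply1] at h1 h2 h3 h4
    refine ext2 ?_ ?_ <;> simp [vec2_apply0, vec2_apply1] <;> linarith
  · rintro rfl v
    rw [inner2, dd1]
    simp [vec2_apply0, vec2_apply1]

lemma sub2 : tangSubdiff (exg14 2) 0 = {vec2 0 (-2)} := by
  ext p
  simp only [tangSubdiff, mem_setOf_eq, mem_singleton_iff]
  constructor
  · intro h
    have h1 := h (vec2 1 0)
    have h2 := h (vec2 (-1) 0)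
    have h3 := h (vec2 0 1)
    have h4 := h (vec2 0 (-1))
    rw [inner2, dd2] at h1 h2 h3 h4
    simp [vec2_apply0, vec2_apply1] at h1 h2 h3 h4
    refine ext2 ?_ ?_ <;> simp [vec2_apply0, vec2_apply1] <;> linarith
  · rintro rfl v
    rw [inner2, dd2]
    simp [vec2_apply0, vec2_apply1]

lemma act (j : Fin 3) : exg14 j (0 : EuclideanSpace ℝ (Fin 2)) = 0 := by
  fin_cases j
  · show |(0 : EuclideanSpace ℝ (Fin 2)) 1| - (0 : EuclideanSpace ℝ (Fin 2)) 0 = 0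
    simp
  · show 1 - ((0 : EuclideanSpace ℝ (Fin 2)) 0) ^ 2
      - ((0 : EuclideanSpace ℝ (Fin 2)) 1 - 1) ^ 2 = 0
    simp [PiLp.zero_apply]
  · show 1 - ((0 : EuclideanSpace ℝ (Fin 2)) 0) ^ 2
      - ((0 : EuclideanSpace ℝ (Fin 2)) 1 + 1) ^ 2 = 0
    simp [PiLp.zero_apply]

lemma tc0 : TangentiallyConvexAt (exg14 0) 0 := by
  constructor
  · intro v; rw [dd0]; exact tendsto0 v
  · have e : dirDeriv (exg14 0) 0 = fun v => |v 1| - v 0 := funext dd0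
    rw [e]
    refine ⟨convex_univ, ?_⟩
    intro x _ y _ a b ha hb hab
    simp only [PiLp.add_apply, PiLp.smul_apply, smul_eq_mul]
    have h := abs_add_le (a * x 1) (b * y 1)
    rw [abs_mul, abs_mul, abs_of_nonneg ha, abs_of_nonneg hb] at h
    linarith

lemma tc1 : TangentiallyConvexAt (exg14 1) 0 := by
  constructor
  · intro v; rw [dd1]; exact tendsto1 v
  · have e : dirDeriv (exg14 1) 0 = fun v => 2 * v 1 := funext dd1
    rw [e]
    refine ⟨convex_univ, ?_⟩
    intro x _ y _ a b ha hb hab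
    simp only [PiLp.add_apply, PiLp.smul_apply, smul_eq_mul]
    linarith

lemma tc2 : TangentiallyConvexAt (exg14 2) 0 := by
  constructor
  · intro v; rw [dd2]; exact tendsto2 v
  · have e : dirDeriv (exg14 2) 0 = fun v => -(2 * v 1) := funext dd2
    rw [e]
    refine ⟨convex_univ, ?_⟩
    intro x _ y _ a b ha hb hab
    simp only [PiLp.add_apply, PiLp.smul_apply, smul_eq_mul]
    linarith

lemma ltc : linTangCone exg14 0 = {x : EuclideanSpace ℝ (Fin 2) | 0 ≤ x 0 ∧ x 1 = 0} := by
  ext v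
  simp only [linTangCone, mem_setOf_eq]
  constructor
  · intro h
    have hA := h 1 (act 1) (vec2 0 2) (by rw [sub1]; rfl)
    have hB := h 2 (act 2) (vec2 0 (-2)) (by rw [sub2]; rfl)
    have hC := h 0 (act 0) (vec2 (-1) 1) (by
      rw [sub0]; exact ⟨rfl, by rw [vec2_apply1]; norm_num⟩)
    rw [inner2] at hA hB hC
    simp only [vec2_apply0, vec2_apply1] at hA hB hC
    constructor <;> linarith
  · rintro ⟨h0, h1⟩ j _ η hη
    fin_cases j
    · have hη' : η ∈ tangSubdiff (exg14 0) 0 := hη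
      rw [sub0] at hη'
      obtain ⟨e0, e1⟩ := hη'
      show ⟪v, η⟫ ≤ 0
      rw [inner2, e0, h1]
      linarith
    · have hη' : η ∈ tangSubdiff (exg14 1) 0 := hη
      rw [sub1, mem_singleton_iff] at hη'
      subst hη'
      show ⟪v, vec2 0 2⟫ ≤ 0
      rw [inner2, vec2_apply0, vec2_apply1, h1]
      linarith
    · have hη' : η ∈ tangSubdiff (exg14 2) 0 := hη
      rw [sub2, mem_singleton_iff] at hη'
      subst hη'
      show ⟪v, vec2 0 (-2)⟫ ≤ 0
      rw [inner2, vec2_apply0, vec2_apply1, h1]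
      linarith

lemma cc : contingentCone (exC14 ∩ exK14) 0
    = {x : EuclideanSpace ℝ (Fin 2) | 0 ≤ x 0 ∧ x 1 = 0} := by
  ext v
  constructor
  · rintro ⟨a, w, hpos, ha, hw, hmem⟩
    have hw0 : Tendsto (fun k => w k 0) atTop (𝓝 (v 0)) := by
      have := ((EuclideanSpace.proj (0 : Fin 2)).continuous.tendsto v).comp hw
      exact this
    have hw1 : Tendsto (fun k => w k 1) atTop (𝓝 (v 1)) := by
      have := ((EuclideanSpace.proj (1 : Fin 2)).continuous.tendsto v).comp hw
      exact this
    have hK : ∀ k, ∀ j : Fin 3, exg14 j (0 + a k • w k) ≤ 0 := fun k => (hmem k).2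
    have key1 : ∀ k, |w k 1| ≤ w k 0 := by
      intro k
      have := hK k 0
      simp only [exg14, Matrix.cons_val_zero, PiLp.add_apply, PiLp.smul_apply,
        PiLp.zero_apply, smul_eq_mul, zero_add] at this
      rw [abs_mul, abs_of_pos (hpos k)] at this
      nlinarith [hpos k, abs_nonneg (w k 1)]
    have key2 : ∀ k, 2 * w k 1 ≤ a k * ((w k 0)^2 + (w k 1)^2) := by
      intro k
      have := hK k 1
      simp only [exg14, Matrix.cons_val_one, Matrix.head_cons, Matrix.cons_val_zero, PiLp.add_apply,
        PiLp.smul_apply, PiLp.zero_apply, smul_eq_mul, zero_add] at this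
      nlinarith [hpos k]
    have key3 : ∀ k, -(2 * w k 1) ≤ a k * ((w k 0)^2 + (w k 1)^2) := by
      intro k
      have := hK k 2
      simp only [exg14, Matrix.cons_val_two, Matrix.tail_cons, Matrix.head_cons,
        PiLp.add_apply, PiLp.smul_apply, PiLp.zero_apply, smul_eq_mul, zero_add] at this
      nlinarith [hpos k]
    have hrhs : Tendsto (fun k => a k * ((w k 0)^2 + (w k 1)^2)) atTop (𝓝 0) := by
      have := ha.mul ((hw0.pow 2).add (hw1.pow 2))
      simpa using this
    have l1 : |v 1| ≤ v 0 := le_of_tendsto_of_tendsto' hw1.abs hw0 key1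
    have l2 : 2 * v 1 ≤ 0 := le_of_tendsto_of_tendsto' (hw1.const_mul 2) hrhs key2
    have l3 : -(2 * v 1) ≤ 0 :=
      le_of_tendsto_of_tendsto' ((hw1.const_mul 2).neg) hrhs key3
    have hv1 : v 1 = 0 := by linarith
    refine ⟨?_, hv1⟩
    rw [hv1] at l1
    simpa using l1
  · rintro ⟨h0, h1⟩
    refine ⟨fun k => 1 / (k + 1), fun _ => v, fun k => by positivity,
      tendsto_one_div_add_atTop_nhds_zero_nat, tendsto_const_nhds, fun k => ?_⟩
    have hc : (0:ℝ) < 1 / (k + 1) := by positivity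
    constructor
    · show (0:ℝ) ≤ (0 + (1 / (k + 1) : ℝ) • v) 0
      simp only [PiLp.add_apply, PiLp.smul_apply, PiLp.zero_apply, smul_eq_mul, zero_add]
      positivity
    · intro j
      have e0 : (0 + (1 / (k + 1) : ℝ) • v) 0 = (1 / (k + 1) : ℝ) * v 0 := by
        simp [PiLp.add_apply, PiLp.smul_apply, PiLp.zero_apply]
      have e1 : (0 + (1 / (k + 1) : ℝ) • v) 1 = 0 := by
        simp [PiLp.add_apply, PiLp.smul_apply, PiLp.zero_apply, h1]
      fin_cases j
      · show |(0 + (1 / (k + 1) : ℝ) • v) 1| - (0 + (1 / (k + 1) : ℝ) • v) 0 ≤ 0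
        rw [e0, e1, abs_zero]
        nlinarith [mul_nonneg hc.le h0]
      · show 1 - ((0 + (1 / (k + 1) : ℝ) • v) 0) ^ 2
          - ((0 + (1 / (k + 1) : ℝ) • v) 1 - 1) ^ 2 ≤ 0
        rw [e0, e1]
        nlinarith [sq_nonneg ((1 / (k + 1) : ℝ) * v 0)]
      · show 1 - ((0 + (1 / (k + 1) : ℝ) • v) 0) ^ 2
          - ((0 + (1 / (k + 1) : ℝ) • v) 1 + 1) ^ 2 ≤ 0
        rw [e0, e1]
        nlinarith [sq_nonneg ((1 / (k + 1) : ℝ) * v 0)]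

end Example14Aux

/-- Example 2.1: at `x̄ = (0,0)`, each `g_j` is tangentially convex with
`g_j(x̄) = 0`, the tangential subdifferentials are as computed, `T_{K̃}(x̄) = D(x̄)` is the
nonnegative `x₁`-axis (so NACQ holds), but NRCQ fails at `x̄`. -/
theorem example_NACQ_without_NRCQ :
    (∀ j : Fin 3, TangentiallyConvexAt (exg14 j) 0) ∧
    (∀ j : Fin 3, exg14 j 0 = 0) ∧
    tangSubdiff (exg14 0) 0 = convexHull ℝ {vec2 (-1) (-1), vec2 (-1) 1} ∧
    tangSubdiff (exg14 1) 0 = {vec2 0 2} ∧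
    tangSubdiff (exg14 2) 0 = {vec2 0 (-2)} ∧
    contingentCone (exC14 ∩ exK14) 0 = linTangCone exg14 0 ∧
    linTangCone exg14 0 = {x : EuclideanSpace ℝ (Fin 2) | 0 ≤ x 0 ∧ x 1 = 0} ∧
    ¬ ∃ v : EuclideanSpace ℝ (Fin 2), v ≠ 0 ∧
        ∀ j : Fin 3, ∀ η ∈ tangSubdiff (exg14 j) 0, ⟪η, v⟫ < 0 := by
  refine ⟨?_, Example14Aux.act,
    Example14Aux.sub0.trans Example14Aux.hull0.symm,
    Example14Aux.sub1, Example14Aux.sub2,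
    Example14Aux.cc.trans Example14Aux.ltc.symm, Example14Aux.ltc, ?_⟩
  · intro j
    fin_cases j
    · exact Example14Aux.tc0
    · exact Example14Aux.tc1
    · exact Example14Aux.tc2
  · rintro ⟨v, hv, h⟩
    have hA := h 1 (vec2 0 2) (by rw [Example14Aux.sub1]; rfl)
    have hB := h 2 (vec2 0 (-2)) (by rw [Example14Aux.sub2]; rfl)
    rw [Example14Aux.inner2] at hA hB
    simp only [Example14Aux.vec2_apply0, Example14Aux.vec2_apply1] at hA hB
    linarith

end
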